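/- Let p(·) be a measurable exponent with 0 < p₋ ≤ p₊ < ∞ on a probability space, 0 < q < ∞, and b a slowly varying function. Then every f ∈ L_{p(·),q,b} has absolutely continuous quasi-norm: for every sequence of measurable sets (A_n) with P(A_n) → 0, one has ‖f χ_{A_n}‖_{p(·),q,b} → 0. -/

import Mathlib

open MeasureTheory Set ENNReal Filter Topology

noncomputable section

/-- A measurable function `b : [1,∞) → (0,∞)` is slowly varying if for every `ε > 0`,
`t ^ ε * b t` is equivalent (up to multiplicative constants) to a nondecreasing function
and `t ^ (-ε) * b t` is equivalent to a nonincreasing function on `[1,∞)`. -/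
def SlowlyVarying (b : ℝ → ℝ) : Prop :=
  (∀ t : ℝ, 1 ≤ t → 0 < b t) ∧
  ∀ ε : ℝ, 0 < ε →
    ((∃ g : ℝ → ℝ, MonotoneOn g (Set.Ici 1) ∧ ∃ c > (0:ℝ), ∃ C > (0:ℝ),
        ∀ t : ℝ, 1 ≤ t → c * g t ≤ t ^ ε * b t ∧ t ^ ε * b t ≤ C * g t) ∧
     (∃ g : ℝ → ℝ, AntitoneOn g (Set.Ici 1) ∧ ∃ c > (0:ℝ), ∃ C > (0:ℝ),
        ∀ t : ℝ, 1 ≤ t → c * g t ≤ t ^ (-ε) * b t ∧ t ^ (-ε) * b t ≤ C * g t))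

/-- `γ_b(t) = b (max {t, t⁻¹})` for `t > 0`. -/
def gammaB (b : ℝ → ℝ) (t : ℝ) : ℝ := b (max t t⁻¹)

variable {Ω : Type*} [MeasurableSpace Ω]

/-- The variable Lebesgue quasi-norm
`‖f‖_{p(·)} = inf {λ > 0 : ∫ (|f|/λ)^{p(·)} dμ ≤ 1}`. -/
def vLpNorm (μ : Measure Ω) (p : Ω → ℝ) (f : Ω → ℝ) : ℝ :=
  sInf {lam : ℝ | 0 < lam ∧ ∫⁻ ω, ENNReal.ofReal ((|f ω| / lam) ^ p ω) ∂μ ≤ 1}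

/-- `f ∈ L_{p(·)}` : the modular is finite for some `λ > 0`. -/
def MemVLp (μ : Measure Ω) (p : Ω → ℝ) (f : Ω → ℝ) : Prop :=
  ∃ lam > (0:ℝ), ∫⁻ ω, ENNReal.ofReal ((|f ω| / lam) ^ p ω) ∂μ ≤ 1

/-- `‖χ_A‖_{p(·)}`. -/
def chiNorm (μ : Measure Ω) (p : Ω → ℝ) (A : Set Ω) : ℝ :=
  vLpNorm μ p (A.indicator 1)

/-- The variable Lorentz–Karamata quasi-norm `‖f‖_{p(·),q,b}` (with `q ∈ (0,∞]`). -/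
def vLKNorm (μ : Measure Ω) (p : Ω → ℝ) (q : ℝ≥0∞) (b : ℝ → ℝ) (f : Ω → ℝ) : ℝ≥0∞ :=
  if q = ∞ then
    ⨆ t ∈ Set.Ioi (0:ℝ), ENNReal.ofReal
      (t * chiNorm μ p {ω | t < |f ω|} * gammaB b (chiNorm μ p {ω | t < |f ω|}))
  else
    (∫⁻ t in Set.Ioi (0:ℝ), ENNReal.ofReal
      ((t * chiNorm μ p {ω | t < |f ω|} * gammaB b (chiNorm μ p {ω | t < |f ω|})) ^ q.toReal / t))
      ^ (1 / q.toReal)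



lemma chiNorm_nonneg (μ : Measure Ω) (p : Ω → ℝ) (S : Set Ω) : 0 ≤ chiNorm μ p S :=
  Real.sInf_nonneg fun _ hx => hx.1.le

lemma modular_indicator_one_le (μ : Measure Ω) [IsProbabilityMeasure μ]
    {p : Ω → ℝ} {pl : ℝ} (hpl : 0 < pl) (hp : ∀ᵐ ω ∂μ, pl ≤ p ω) (S : Set Ω) :
    ∫⁻ ω, ENNReal.ofReal ((|S.indicator (1 : Ω → ℝ) ω| / 1) ^ p ω) ∂μ ≤ 1 := by
  calc ∫⁻ ω, ENNReal.ofReal ((|S.indicator (1 : Ω → ℝ) ω| / 1) ^ p ω) ∂μ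
      ≤ ∫⁻ _, 1 ∂μ := by
        apply lintegral_mono_ae
        filter_upwards [hp] with ω hω
        by_cases h : ω ∈ S
        · simp [Set.indicator_of_mem h]
        · simp [Set.indicator_of_notMem h, Real.zero_rpow (hpl.trans_le hω).ne']
    _ = 1 := by simp

lemma chiNorm_le_one (μ : Measure Ω) [IsProbabilityMeasure μ]
    {p : Ω → ℝ} {pl : ℝ} (hpl : 0 < pl) (hp : ∀ᵐ ω ∂μ, pl ≤ p ω) (S : Set Ω) :
    chiNorm μ p S ≤ 1 :=
  csInf_le ⟨0, fun _ hx => hx.1.le⟩ ⟨one_pos, modular_indicator_one_le μ hpl hp S⟩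

lemma chiNorm_mono (μ : Measure Ω) [IsProbabilityMeasure μ]
    {p : Ω → ℝ} {pl : ℝ} (hpl : 0 < pl) (hp : ∀ᵐ ω ∂μ, pl ≤ p ω)
    {S T : Set Ω} (hST : S ⊆ T) :
    chiNorm μ p S ≤ chiNorm μ p T := by
  have hmem : (1:ℝ) ∈ {lam : ℝ | 0 < lam ∧
      ∫⁻ ω, ENNReal.ofReal ((|T.indicator (1 : Ω → ℝ) ω| / lam) ^ p ω) ∂μ ≤ 1} :=
    ⟨one_pos, modular_indicator_one_le μ hpl hp T⟩
  apply csInf_le_csInf ⟨0, fun _ hx => hx.1.le⟩ ⟨1, hmem⟩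
  rintro lam ⟨hlam, hmod⟩
  refine ⟨hlam, le_trans (lintegral_mono_ae ?_) hmod⟩
  filter_upwards [hp] with ω hω
  apply ENNReal.ofReal_le_ofReal
  have habs : |S.indicator (1 : Ω → ℝ) ω| ≤ |T.indicator (1 : Ω → ℝ) ω| := by
    by_cases h : ω ∈ S
    · rw [Set.indicator_of_mem h, Set.indicator_of_mem (hST h)]
    · rw [Set.indicator_of_notMem h, abs_zero]
      exact abs_nonneg _
  exact Real.rpow_le_rpow (by positivity) (by gcongr) (hpl.le.trans hω)

lemma chiNorm_le_of_measure_le (μ : Measure Ω) [IsProbabilityMeasure μ]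
    {p : Ω → ℝ} {pl pu : ℝ} (hpl : 0 < pl)
    (hp : ∀ᵐ ω ∂μ, pl ≤ p ω ∧ p ω ≤ pu) {S : Set Ω} (hS : MeasurableSet S)
    {lam : ℝ} (hlam : 0 < lam) (hlam1 : lam ≤ 1)
    (hμ : μ S ≤ ENNReal.ofReal (lam ^ pu)) :
    chiNorm μ p S ≤ lam := by
  apply csInf_le ⟨0, fun _ hx => hx.1.le⟩
  refine ⟨hlam, ?_⟩
  have hpt : ∀ᵐ ω ∂μ, ENNReal.ofReal ((|S.indicator (1 : Ω → ℝ) ω| / lam) ^ p ω)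
      ≤ S.indicator (fun _ => ENNReal.ofReal (lam ^ (-pu))) ω := by
    filter_upwards [hp] with ω hω
    obtain ⟨h1, h2⟩ := hω
    by_cases h : ω ∈ S
    · rw [Set.indicator_of_mem h, Set.indicator_of_mem h]
      apply ENNReal.ofReal_le_ofReal
      rw [Pi.one_apply, abs_one, one_div, Real.inv_rpow hlam.le, ← Real.rpow_neg hlam.le]
      exact Real.rpow_le_rpow_of_exponent_ge hlam hlam1 (neg_le_neg h2)
    · rw [Set.indicator_of_notMem h, Set.indicator_of_notMem h, abs_zero, zero_div,
        Real.zero_rpow (hpl.trans_le h1).ne']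
      simp
  calc ∫⁻ ω, ENNReal.ofReal ((|S.indicator (1 : Ω → ℝ) ω| / lam) ^ p ω) ∂μ
      ≤ ∫⁻ ω, S.indicator (fun _ => ENNReal.ofReal (lam ^ (-pu))) ω ∂μ :=
        lintegral_mono_ae hpt
    _ = ENNReal.ofReal (lam ^ (-pu)) * μ S := lintegral_indicator_const hS _
    _ ≤ ENNReal.ofReal (lam ^ (-pu)) * ENNReal.ofReal (lam ^ pu) := by gcongr
    _ = ENNReal.ofReal (lam ^ (-pu) * lam ^ pu) :=
        (ENNReal.ofReal_mul (by positivity)).symm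
    _ ≤ 1 := by
        rw [← Real.rpow_add hlam, neg_add_cancel, Real.rpow_zero, ENNReal.ofReal_one]

lemma gammaB_pos {b : ℝ → ℝ} (hb : SlowlyVarying b) {x : ℝ} (hx : 0 < x) :
    0 < gammaB b x := by
  apply hb.1
  rcases le_or_gt 1 x with h | h
  · exact le_max_of_le_left h
  · exact le_max_of_le_right ((one_le_inv₀ hx).2 h.le)

lemma gamma_half {b : ℝ → ℝ} (hb : SlowlyVarying b) : ∃ K : ℝ, 0 < K ∧
    ∀ s t : ℝ, 0 < s → s ≤ t → t ≤ 1 →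
      s ^ (1/2 : ℝ) * gammaB b s ≤ K * (t ^ (1/2 : ℝ) * gammaB b t) := by
  obtain ⟨-, g, hg, c, hc, C, hC, hcomp⟩ := hb.2 (1/2) one_half_pos
  refine ⟨C / c, div_pos hC hc, ?_⟩
  intro s t hs hst ht1
  have hs1 : s ≤ 1 := hst.trans ht1
  have ht : 0 < t := hs.trans_le hst
  have hmax : ∀ x : ℝ, 0 < x → x ≤ 1 → max x x⁻¹ = x⁻¹ := fun x hx hx1 =>
    max_eq_right (hx1.trans ((one_le_inv₀ hx).2 hx1))
  have hsinv : (1:ℝ) ≤ s⁻¹ := (one_le_inv₀ hs).2 hs1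
  have htinv : (1:ℝ) ≤ t⁻¹ := (one_le_inv₀ ht).2 ht1
  have hineq : t⁻¹ ≤ s⁻¹ := by gcongr
  have hrw : ∀ x : ℝ, 0 < x → x ^ (1/2:ℝ) = (x⁻¹) ^ (-(1/2):ℝ) := by
    intro x hx
    rw [Real.rpow_neg (inv_nonneg.mpr hx.le), Real.inv_rpow hx.le, inv_inv]
  rw [gammaB, gammaB, hmax s hs hs1, hmax t ht ht1, hrw s hs, hrw t ht]
  calc (s⁻¹) ^ (-(1/2):ℝ) * b s⁻¹ ≤ C * g s⁻¹ := (hcomp _ hsinv).2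
    _ ≤ C * g t⁻¹ := mul_le_mul_of_nonneg_left (hg htinv hsinv hineq) hC.le
    _ = (C / c) * (c * g t⁻¹) := by field_simp
    _ ≤ (C / c) * ((t⁻¹) ^ (-(1/2):ℝ) * b t⁻¹) :=
        mul_le_mul_of_nonneg_left (hcomp _ htinv).1 (div_pos hC hc).le

lemma lintegral_Ioi_split (Φ : ℝ → ℝ≥0∞) {s : Set ℝ} (hs : MeasurableSet s)
    (hsub : s ⊆ Ioi (0:ℝ)) :
    ∫⁻ t in Ioi (0:ℝ), Φ t = (∫⁻ t in s, Φ t) + ∫⁻ t in Ioi (0:ℝ) \ s, Φ t := by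
  have h : volume.restrict (Ioi (0:ℝ))
      = volume.restrict s + volume.restrict (Ioi (0:ℝ) \ s) := by
    rw [← Measure.restrict_union disjoint_sdiff_right (measurableSet_Ioi.diff hs),
      union_diff_cancel hsub]
  rw [h, lintegral_add_measure]

lemma tail_small (Φ : ℝ → ℝ≥0∞) (hΦ : ∫⁻ t in Ioi (0:ℝ), Φ t ≠ ∞)
    {ε : ℝ≥0∞} (hε : ε ≠ 0) :
    ∃ n : ℕ, ∫⁻ t in Ioi (0:ℝ) \ Ioc (1/((n:ℝ)+1)) ((n:ℝ)+1), Φ t ≤ ε := by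
  obtain ⟨g, hgm, hgle, hgeq⟩ :=
    exists_measurable_le_lintegral_eq (volume.restrict (Ioi (0:ℝ))) Φ
  set B : ℕ → Set ℝ := fun n => Ioc (1/((n:ℝ)+1)) ((n:ℝ)+1) with hB
  have hBsub : ∀ n, B n ⊆ Ioi (0:ℝ) := fun n x hx => lt_trans (by positivity) hx.1
  have hBmeas : ∀ n, MeasurableSet (B n) := fun n => measurableSet_Ioc
  have hmono : Monotone B := by
    intro m n hmn
    have h1 : ((m:ℝ)+1) ≤ (n:ℝ)+1 := by
      have := (Nat.cast_le (α := ℝ)).2 hmn; linarith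
    exact Ioc_subset_Ioc (one_div_le_one_div_of_le (by positivity) h1) h1
  have hUnion : ⋃ n, B n = Ioi (0:ℝ) := by
    apply Subset.antisymm (iUnion_subset hBsub)
    intro x hx
    have hx0 : (0:ℝ) < x := hx
    obtain ⟨n, hn⟩ := exists_nat_gt (max x (1/x))
    refine mem_iUnion.mpr ⟨n, ?_, ?_⟩
    · have hx1 : 1/x < (n:ℝ)+1 := ((le_max_right _ _).trans_lt hn).trans (lt_add_one _)
      rw [div_lt_iff₀ (by positivity)]
      have h2 : 1 < ((n:ℝ)+1) * x := (div_lt_iff₀ hx0).mp hx1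
      linarith
    · exact (((le_max_left _ _).trans_lt hn).trans (lt_add_one _)).le
  set ν := (volume.restrict (Ioi (0:ℝ))).withDensity g with hνdef
  have hν : ∀ s : Set ℝ, MeasurableSet s → s ⊆ Ioi (0:ℝ) → ν s = ∫⁻ t in s, g t := by
    intro s hs hsub
    rw [hνdef, withDensity_apply _ hs, Measure.restrict_restrict hs,
      inter_eq_self_of_subset_left hsub]
  set J := ∫⁻ t in Ioi (0:ℝ), Φ t with hJ
  have hνtot : ν (Ioi (0:ℝ)) = J := by
    rw [hν _ measurableSet_Ioi Subset.rfl]; exact hgeq.symm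
  have htendsto : Tendsto (fun n => ν (B n) + ε) atTop (𝓝 (J + ε)) := by
    have h := tendsto_measure_iUnion_atTop (μ := ν) hmono
    rw [hUnion, hνtot] at h
    exact h.add_const ε
  have hev : ∀ᶠ n in atTop, J < ν (B n) + ε :=
    htendsto.eventually (eventually_gt_nhds (ENNReal.lt_add_right hΦ hε))
  obtain ⟨n, hn⟩ := hev.exists
  refine ⟨n, ?_⟩
  have hsplit : J = (∫⁻ t in B n, Φ t) + ∫⁻ t in Ioi (0:ℝ) \ B n, Φ t :=
    lintegral_Ioi_split Φ (hBmeas n) (hBsub n)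
  have hle1 : ν (B n) ≤ ∫⁻ t in B n, Φ t := by
    rw [hν _ (hBmeas n) (hBsub n)]
    exact lintegral_mono hgle
  have hfin : (∫⁻ t in B n, Φ t) ≠ ∞ := by
    intro hcon
    rw [hsplit, hcon] at hΦ
    simp at hΦ
  have h1 : (∫⁻ t in B n, Φ t) + (∫⁻ t in Ioi (0:ℝ) \ B n, Φ t)
      ≤ (∫⁻ t in B n, Φ t) + ε := by
    rw [← hsplit]
    exact hn.le.trans (add_le_add_left hle1 _)
  exact (ENNReal.add_le_add_iff_left hfin).mp h1


/-- Absolute continuity of the quasi-norm: for `0 < q < ∞` and `f ∈ L_{p(·),q,b}`,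
if `P(A_n) → 0` then `‖f χ_{A_n}‖_{p(·),q,b} → 0`. -/
theorem vLKNorm_abs_continuous (μ : Measure Ω) [IsProbabilityMeasure μ]
    (p : Ω → ℝ) (pl pu : ℝ) (hpl : 0 < pl) (hple : pl ≤ pu)
    (hp : ∀ᵐ ω ∂μ, pl ≤ p ω ∧ p ω ≤ pu)
    (q : ℝ) (hq : 0 < q) (b : ℝ → ℝ) (hb : SlowlyVarying b)
    (f : Ω → ℝ) (hfm : Measurable f)
    (hfL : vLKNorm μ p (ENNReal.ofReal q) b f < ∞)
    (A : ℕ → Set Ω) (hA : ∀ n, MeasurableSet (A n))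
    (hA0 : Filter.Tendsto (fun n => μ (A n)) Filter.atTop (nhds 0)) :
    Filter.Tendsto (fun n => vLKNorm μ p (ENNReal.ofReal q) b ((A n).indicator f))
      Filter.atTop (nhds 0) := by
  have hp1 : ∀ᵐ ω ∂μ, pl ≤ p ω := hp.mono fun ω h => h.1
  obtain ⟨K, hK, hKcomp⟩ := gamma_half hb
  have hγ1 : 0 < gammaB b 1 := gammaB_pos hb one_pos
  have hvlk : ∀ h : Ω → ℝ, vLKNorm μ p (ENNReal.ofReal q) b h
      = (∫⁻ t in Ioi (0:ℝ), ENNReal.ofReal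
          ((t * chiNorm μ p {ω | t < |h ω|} * gammaB b (chiNorm μ p {ω | t < |h ω|})) ^ q / t))
        ^ (1/q) := by
    intro h
    rw [vLKNorm, if_neg ENNReal.ofReal_ne_top, ENNReal.toReal_ofReal hq.le]
  rw [hvlk f] at hfL
  have hJfin : (∫⁻ t in Ioi (0:ℝ), ENNReal.ofReal
      ((t * chiNorm μ p {ω | t < |f ω|} * gammaB b (chiNorm μ p {ω | t < |f ω|})) ^ q / t))
      ≠ ∞ := by
    intro hcon
    rw [hcon, ENNReal.top_rpow_of_pos (by positivity)] at hfL
    exact lt_irrefl _ hfL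
  -- comparison lemmas
  have hcomp1 : ∀ s r : ℝ, 0 < s → s ≤ r → r ≤ 1 →
      s * gammaB b s ≤ K * (r * gammaB b r) := by
    intro s r hs hsr hr1
    have hr : 0 < r := hs.trans_le hsr
    have h2 : s ^ (1/2:ℝ) * gammaB b s ≤ K * (r ^ (1/2:ℝ) * gammaB b r) :=
      hKcomp s r hs hsr hr1
    have hss : s ^ (1/2:ℝ) * s ^ (1/2:ℝ) = s := by
      rw [← Real.rpow_add hs]; norm_num
    have hrr : r ^ (1/2:ℝ) * r ^ (1/2:ℝ) = r := by
      rw [← Real.rpow_add hr]; norm_num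
    have hsr2 : s ^ (1/2:ℝ) ≤ r ^ (1/2:ℝ) := Real.rpow_le_rpow hs.le hsr (by norm_num)
    have hγr : 0 < gammaB b r := gammaB_pos hb hr
    have hpos : 0 ≤ K * (r ^ (1/2:ℝ) * gammaB b r) :=
      mul_nonneg hK.le (mul_nonneg (Real.rpow_nonneg hr.le _) hγr.le)
    calc s * gammaB b s = s ^ (1/2:ℝ) * (s ^ (1/2:ℝ) * gammaB b s) := by
          rw [← mul_assoc, hss]
      _ ≤ s ^ (1/2:ℝ) * (K * (r ^ (1/2:ℝ) * gammaB b r)) :=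
          mul_le_mul_of_nonneg_left h2 (Real.rpow_nonneg hs.le _)
      _ ≤ r ^ (1/2:ℝ) * (K * (r ^ (1/2:ℝ) * gammaB b r)) :=
          mul_le_mul_of_nonneg_right hsr2 hpos
      _ = K * ((r ^ (1/2:ℝ) * r ^ (1/2:ℝ)) * gammaB b r) := by ring
      _ = K * (r * gammaB b r) := by rw [hrr]
  have hcomp2 : ∀ s lam : ℝ, 0 < s → s ≤ lam → lam ≤ 1 →
      s * gammaB b s ≤ K * gammaB b 1 * lam ^ (1/2:ℝ) := by
    intro s lam hs hsl hl1
    have hs1 : s ≤ 1 := hsl.trans hl1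
    have h2 : s ^ (1/2:ℝ) * gammaB b s ≤ K * gammaB b 1 := by
      have h := hKcomp s 1 hs hs1 le_rfl
      rwa [Real.one_rpow, one_mul] at h
    have hsl2 : s ^ (1/2:ℝ) ≤ lam ^ (1/2:ℝ) := Real.rpow_le_rpow hs.le hsl (by norm_num)
    have hss : s ^ (1/2:ℝ) * s ^ (1/2:ℝ) = s := by rw [← Real.rpow_add hs]; norm_num
    calc s * gammaB b s = s ^ (1/2:ℝ) * (s ^ (1/2:ℝ) * gammaB b s) := by
          rw [← mul_assoc, hss]
      _ ≤ s ^ (1/2:ℝ) * (K * gammaB b 1) :=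
          mul_le_mul_of_nonneg_left h2 (Real.rpow_nonneg hs.le _)
      _ ≤ lam ^ (1/2:ℝ) * (K * gammaB b 1) :=
          mul_le_mul_of_nonneg_right hsl2 (mul_nonneg hK.le hγ1.le)
      _ = K * gammaB b 1 * lam ^ (1/2:ℝ) := by ring
  have hlev : ∀ (n : ℕ) (t : ℝ), 0 < t →
      {ω | t < |(A n).indicator f ω|} = A n ∩ {ω | t < |f ω|} := by
    intro n t ht
    ext ω
    simp only [mem_setOf_eq, mem_inter_iff]
    by_cases h : ω ∈ A n
    · simp [Set.indicator_of_mem h, h]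
    · simp [Set.indicator_of_notMem h, h, not_lt.mpr ht.le]
  -- pointwise domination
  have hdom : ∀ (n : ℕ) (t : ℝ), 0 < t →
      ENNReal.ofReal ((t * chiNorm μ p {ω | t < |(A n).indicator f ω|}
          * gammaB b (chiNorm μ p {ω | t < |(A n).indicator f ω|})) ^ q / t)
        ≤ ENNReal.ofReal (K ^ q) * ENNReal.ofReal
          ((t * chiNorm μ p {ω | t < |f ω|} * gammaB b (chiNorm μ p {ω | t < |f ω|})) ^ q / t) := by
    intro n t ht
    set s := chiNorm μ p {ω | t < |(A n).indicator f ω|} with hsdef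
    set r := chiNorm μ p {ω | t < |f ω|} with hrdef
    have hs0 : 0 ≤ s := chiNorm_nonneg _ _ _
    have hsr : s ≤ r := by
      rw [hsdef, hrdef]
      exact chiNorm_mono μ hpl hp1 (by rw [hlev n t ht]; exact inter_subset_right)
    have hr1 : r ≤ 1 := chiNorm_le_one μ hpl hp1 _
    rcases eq_or_lt_of_le hs0 with h0 | hspos
    · rw [← h0, mul_zero, zero_mul, Real.zero_rpow hq.ne', zero_div, ENNReal.ofReal_zero]
      exact zero_le
    · have hr0 : 0 < r := hspos.trans_le hsr
      have hγs : 0 < gammaB b s := gammaB_pos hb hspos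
      have hγr : 0 < gammaB b r := gammaB_pos hb hr0
      have hXY : t * s * gammaB b s ≤ K * (t * r * gammaB b r) := by
        have h := hcomp1 s r hspos hsr hr1
        calc t * s * gammaB b s = t * (s * gammaB b s) := by ring
          _ ≤ t * (K * (r * gammaB b r)) := mul_le_mul_of_nonneg_left h ht.le
          _ = K * (t * r * gammaB b r) := by ring
      have hXpos : 0 ≤ t * s * gammaB b s :=
        mul_nonneg (mul_nonneg ht.le hs0) hγs.le
      have hYpos : 0 ≤ t * r * gammaB b r :=
        mul_nonneg (mul_nonneg ht.le hr0.le) hγr.le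
      have hq' : (t * s * gammaB b s) ^ q ≤ K ^ q * (t * r * gammaB b r) ^ q := by
        calc (t * s * gammaB b s) ^ q ≤ (K * (t * r * gammaB b r)) ^ q :=
            Real.rpow_le_rpow hXpos hXY hq.le
          _ = K ^ q * (t * r * gammaB b r) ^ q := Real.mul_rpow hK.le hYpos
      rw [← ENNReal.ofReal_mul (Real.rpow_nonneg hK.le _)]
      apply ENNReal.ofReal_le_ofReal
      rw [← mul_div_assoc]
      gcongr
  -- reduce to integral convergence
  suffices hmain : Tendsto (fun n => ∫⁻ t in Ioi (0:ℝ),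
      ENNReal.ofReal ((t * chiNorm μ p {ω | t < |(A n).indicator f ω|}
        * gammaB b (chiNorm μ p {ω | t < |(A n).indicator f ω|})) ^ q / t)) atTop (𝓝 0) by
    rw [ENNReal.tendsto_nhds_zero]
    intro ε hε
    rcases eq_or_ne ε ∞ with rfl | hεtop
    · exact Eventually.of_forall fun n => le_top
    · have hεq : (0:ℝ≥0∞) < ε ^ q := ENNReal.rpow_pos hε hεtop
      filter_upwards [ENNReal.tendsto_nhds_zero.mp hmain (ε ^ q) hεq] with n hn
      rw [hvlk ((A n).indicator f)]
      refine le_trans (ENNReal.rpow_le_rpow hn (by positivity)) ?_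
      rw [← ENNReal.rpow_mul, mul_one_div, div_self hq.ne', ENNReal.rpow_one]
  rw [ENNReal.tendsto_nhds_zero]
  intro ε hε
  have hε'0 : (min ε 1) ≠ 0 := (lt_min hε zero_lt_one).ne'
  have hε'top : (min ε 1) ≠ ∞ := ((min_le_right ε 1).trans_lt one_lt_top).ne
  have hhalf_ne_top : min ε 1 / 2 ≠ ∞ :=
    (ENNReal.half_le_self.trans_lt ((min_le_right ε 1).trans_lt one_lt_top)).ne
  have hhalf_ne_zero : min ε 1 / 2 ≠ 0 :=
    ENNReal.div_ne_zero.mpr ⟨hε'0, ENNReal.ofNat_ne_top⟩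
  have hKq0 : ENNReal.ofReal (K ^ q) ≠ 0 :=
    (ENNReal.ofReal_pos.mpr (Real.rpow_pos_of_pos hK q)).ne'
  have hεt0 : min ε 1 / 2 / ENNReal.ofReal (K ^ q) ≠ 0 :=
    ENNReal.div_ne_zero.mpr ⟨hhalf_ne_zero, ENNReal.ofReal_ne_top⟩
  obtain ⟨n₀, htail⟩ := tail_small _ hJfin hεt0
  set δ : ℝ := 1/((n₀:ℝ)+1) with hδdef
  set T : ℝ := (n₀:ℝ)+1 with hTdef
  have hδ : 0 < δ := by rw [hδdef]; positivity
  have hT1 : (1:ℝ) ≤ T := by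
    rw [hTdef]; have := Nat.cast_nonneg (α := ℝ) n₀; linarith
  have hT0 : 0 < T := lt_of_lt_of_le one_pos hT1
  have hδ1 : δ ≤ 1 := by
    rw [hδdef, div_le_one (by positivity)]
    have := Nat.cast_nonneg (α := ℝ) n₀; linarith
  have hδT : δ ≤ T := hδ1.trans hT1
  have hBIoi : Ioc δ T ⊆ Ioi (0:ℝ) := fun x hx => hδ.trans hx.1
  -- choose lam
  set ε2 : ℝ := (min ε 1 / 2).toReal with hε2def
  have hε2pos : 0 < ε2 := ENNReal.toReal_pos hhalf_ne_zero hhalf_ne_top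
  set C1 : ℝ := (T * K * gammaB b 1) ^ q * (T - δ) / δ + 1 with hC1def
  have hC1pos : 0 < C1 := by
    have h1 : 0 ≤ (T * K * gammaB b 1) ^ q * (T - δ) / δ :=
      div_nonneg (mul_nonneg (Real.rpow_nonneg
        (mul_nonneg (mul_nonneg hT0.le hK.le) hγ1.le) _) (sub_nonneg.mpr hδT)) hδ.le
    rw [hC1def]; linarith
  set lam : ℝ := min 1 ((ε2 / C1) ^ (2/q : ℝ)) with hlamdef
  have hlam0 : 0 < lam :=
    lt_min one_pos (Real.rpow_pos_of_pos (div_pos hε2pos hC1pos) _)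
  have hlam1 : lam ≤ 1 := min_le_left _ _
  have hlamb : C1 * lam ^ (q/2 : ℝ) ≤ ε2 := by
    have h2 : ((ε2/C1) ^ (2/q:ℝ)) ^ (q/2:ℝ) = ε2 / C1 := by
      rw [← Real.rpow_mul (div_pos hε2pos hC1pos).le,
        show (2/q) * (q/2) = (1:ℝ) from by field_simp, Real.rpow_one]
    have h1 : lam ^ (q/2:ℝ) ≤ ε2 / C1 := by
      rw [← h2]
      exact Real.rpow_le_rpow hlam0.le (min_le_right _ _) (by positivity)
    calc C1 * lam ^ (q/2:ℝ) ≤ C1 * (ε2 / C1) :=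
        mul_le_mul_of_nonneg_left h1 hC1pos.le
      _ = ε2 := by rw [mul_comm, div_mul_cancel₀ _ hC1pos.ne']
  have hevA : ∀ᶠ n in atTop, μ (A n) ≤ ENNReal.ofReal (lam ^ pu) :=
    hA0.eventually_le_const (ENNReal.ofReal_pos.mpr (Real.rpow_pos_of_pos hlam0 pu))
  filter_upwards [hevA] with n hn
  have hmid : (∫⁻ t in Ioc δ T,
      ENNReal.ofReal ((t * chiNorm μ p {ω | t < |(A n).indicator f ω|}
        * gammaB b (chiNorm μ p {ω | t < |(A n).indicator f ω|})) ^ q / t))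
      ≤ min ε 1 / 2 := by
    have hpt : ∀ t ∈ Ioc δ T,
        ENNReal.ofReal ((t * chiNorm μ p {ω | t < |(A n).indicator f ω|}
          * gammaB b (chiNorm μ p {ω | t < |(A n).indicator f ω|})) ^ q / t)
        ≤ ENNReal.ofReal ((T * K * gammaB b 1 * lam ^ (1/2:ℝ)) ^ q / δ) := by
      intro t ht
      have ht0 : 0 < t := hδ.trans ht.1
      set s := chiNorm μ p {ω | t < |(A n).indicator f ω|} with hsdef
      have hs0 : 0 ≤ s := chiNorm_nonneg _ _ _
      rcases eq_or_lt_of_le hs0 with h0 | hspos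
      · rw [← h0, mul_zero, zero_mul, Real.zero_rpow hq.ne', zero_div, ENNReal.ofReal_zero]
        exact zero_le
      · have hslam : s ≤ lam := by
          rw [hsdef]
          refine le_trans (chiNorm_mono μ hpl hp1 ?_)
            (chiNorm_le_of_measure_le μ hpl hp (hA n) hlam0 hlam1 hn)
          rw [hlev n t ht0]; exact inter_subset_left
        have hγs : 0 < gammaB b s := gammaB_pos hb hspos
        apply ENNReal.ofReal_le_ofReal
        have hbound : t * s * gammaB b s ≤ T * K * gammaB b 1 * lam ^ (1/2:ℝ) := by
          have h1 : s * gammaB b s ≤ K * gammaB b 1 * lam ^ (1/2:ℝ) :=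
            hcomp2 s lam hspos hslam hlam1
          calc t * s * gammaB b s = t * (s * gammaB b s) := by ring
            _ ≤ T * (K * gammaB b 1 * lam ^ (1/2:ℝ)) :=
                mul_le_mul ht.2 h1 (mul_nonneg hs0 hγs.le) hT0.le
            _ = T * K * gammaB b 1 * lam ^ (1/2:ℝ) := by ring
        have hnum : (t * s * gammaB b s) ^ q ≤ (T * K * gammaB b 1 * lam ^ (1/2:ℝ)) ^ q :=
          Real.rpow_le_rpow (mul_nonneg (mul_nonneg ht0.le hs0) hγs.le) hbound hq.le
        exact div_le_div₀ (Real.rpow_nonneg (le_trans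
          (mul_nonneg (mul_nonneg ht0.le hs0) hγs.le) hbound) _) hnum hδ ht.1.le
    calc (∫⁻ t in Ioc δ T,
        ENNReal.ofReal ((t * chiNorm μ p {ω | t < |(A n).indicator f ω|}
          * gammaB b (chiNorm μ p {ω | t < |(A n).indicator f ω|})) ^ q / t))
        ≤ ∫⁻ _ in Ioc δ T, ENNReal.ofReal ((T * K * gammaB b 1 * lam ^ (1/2:ℝ)) ^ q / δ) := by
          apply lintegral_mono_ae
          filter_upwards [ae_restrict_mem measurableSet_Ioc] with t ht
          exact hpt t ht
      _ = ENNReal.ofReal ((T * K * gammaB b 1 * lam ^ (1/2:ℝ)) ^ q / δ) * volume (Ioc δ T) :=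
          setLIntegral_const _ _
      _ = ENNReal.ofReal ((T * K * gammaB b 1 * lam ^ (1/2:ℝ)) ^ q / δ)
            * ENNReal.ofReal (T - δ) := by rw [Real.volume_Ioc]
      _ = ENNReal.ofReal ((T * K * gammaB b 1 * lam ^ (1/2:ℝ)) ^ q / δ * (T - δ)) :=
          (ENNReal.ofReal_mul (div_nonneg (Real.rpow_nonneg (mul_nonneg (mul_nonneg
            (mul_nonneg hT0.le hK.le) hγ1.le) (Real.rpow_nonneg hlam0.le _)) _) hδ.le)).symm
      _ ≤ ENNReal.ofReal ε2 := by
          apply ENNReal.ofReal_le_ofReal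
          have heq : (T * K * gammaB b 1 * lam ^ (1/2:ℝ)) ^ q / δ * (T - δ)
              = ((T * K * gammaB b 1) ^ q * (T - δ) / δ) * lam ^ (q/2:ℝ) := by
            rw [Real.mul_rpow (mul_nonneg (mul_nonneg hT0.le hK.le) hγ1.le)
              (Real.rpow_nonneg hlam0.le _), ← Real.rpow_mul hlam0.le,
              show (1/2) * q = q/2 from by ring]
            ring
          rw [heq]
          calc ((T * K * gammaB b 1) ^ q * (T - δ) / δ) * lam ^ (q/2:ℝ)
              ≤ C1 * lam ^ (q/2:ℝ) := by
                apply mul_le_mul_of_nonneg_right _ (Real.rpow_nonneg hlam0.le _)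
                rw [hC1def]; linarith
            _ ≤ ε2 := hlamb
      _ = min ε 1 / 2 := by rw [hε2def, ENNReal.ofReal_toReal hhalf_ne_top]
  have hrest : (∫⁻ t in Ioi (0:ℝ) \ Ioc δ T,
      ENNReal.ofReal ((t * chiNorm μ p {ω | t < |(A n).indicator f ω|}
        * gammaB b (chiNorm μ p {ω | t < |(A n).indicator f ω|})) ^ q / t))
      ≤ min ε 1 / 2 := by
    calc (∫⁻ t in Ioi (0:ℝ) \ Ioc δ T,
        ENNReal.ofReal ((t * chiNorm μ p {ω | t < |(A n).indicator f ω|}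
          * gammaB b (chiNorm μ p {ω | t < |(A n).indicator f ω|})) ^ q / t))
        ≤ ∫⁻ t in Ioi (0:ℝ) \ Ioc δ T, ENNReal.ofReal (K ^ q) * ENNReal.ofReal
            ((t * chiNorm μ p {ω | t < |f ω|}
              * gammaB b (chiNorm μ p {ω | t < |f ω|})) ^ q / t) := by
          apply lintegral_mono_ae
          filter_upwards [ae_restrict_mem (measurableSet_Ioi.diff measurableSet_Ioc)] with t ht
          exact hdom n t ht.1
      _ = ENNReal.ofReal (K ^ q) * ∫⁻ t in Ioi (0:ℝ) \ Ioc δ T, ENNReal.ofReal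
            ((t * chiNorm μ p {ω | t < |f ω|}
              * gammaB b (chiNorm μ p {ω | t < |f ω|})) ^ q / t) :=
          lintegral_const_mul' _ _ ENNReal.ofReal_ne_top
      _ ≤ ENNReal.ofReal (K ^ q) * (min ε 1 / 2 / ENNReal.ofReal (K ^ q)) :=
          mul_le_mul_right htail _
      _ ≤ min ε 1 / 2 := ENNReal.mul_div_le
  refine le_trans (le_of_eq (lintegral_Ioi_split _ measurableSet_Ioc hBIoi)) ?_
  refine le_trans (add_le_add hmid hrest) ?_
  rw [ENNReal.add_halves]
  exact min_le_left _ _
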